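/- For every w ≥ 2 and k ≥ 4, every P_k-free graph G with clique number at most w satisfies χ(G) ≤ (k−2)^{w−1}. -/

import Mathlib

open SimpleGraph

/-- The chromatic number of the subgraph of `G` induced on `S`, as a natural number. -/
noncomputable def chiSet {V : Type*} (G : SimpleGraph V) (S : Set V) : ℕ :=
  (G.induce S).chromaticNumber.toNat

/-- The chromatic number of `G`, as a natural number. -/
noncomputable def chi {V : Type*} (G : SimpleGraph V) : ℕ :=
  G.chromaticNumber.toNat

/-- `(A, B)` is an anticomplete pair: no edge of `G` joins `A` and `B`. -/
def Anticomplete {V : Type*} (G : SimpleGraph V) (A B : Set V) : Prop :=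
  ∀ a ∈ A, ∀ b ∈ B, ¬ G.Adj a b

/-- `G` is `H`-free: no induced subgraph of `G` is isomorphic to `H`. -/
def FreeOf {V W : Type*} (G : SimpleGraph V) (H : SimpleGraph W) : Prop :=
  IsEmpty (H ↪g G)

/-! ### Auxiliary colour theory on subsets -/

section Aux

variable {V : Type*} (G : SimpleGraph V)

/-- `S` can be properly coloured with `n` colours. -/
def GoodCol (S : Set V) (n : ℕ) : Prop :=
  ∃ f : V → ℕ, (∀ v ∈ S, f v < n) ∧ ∀ a ∈ S, ∀ b ∈ S, G.Adj a b → f a ≠ f b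

/-- One-step reachability inside a set. -/
def StepIn (D : Set V) (a b : V) : Prop := a ∈ D ∧ b ∈ D ∧ G.Adj a b

/-- Reachability inside a set. -/
def ReachIn (D : Set V) : V → V → Prop := Relation.ReflTransGen (StepIn G D)

/-- The connected component of `x` inside the set `D`. -/
def compIn (D : Set V) (x : V) : Set V := {y | ReachIn G D x y}

variable {G}

lemma GoodCol.mono_set {S T : Set V} {n : ℕ} (h : GoodCol G T n) (hST : S ⊆ T) :
    GoodCol G S n := by
  obtain ⟨f, hf1, hf2⟩ := h
  exact ⟨f, fun v hv => hf1 v (hST hv), fun a ha b hb => hf2 a (hST ha) b (hST hb)⟩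

lemma GoodCol.mono_nat {S : Set V} {n n' : ℕ} (h : GoodCol G S n) (hn : n ≤ n') :
    GoodCol G S n' := by
  obtain ⟨f, hf1, hf2⟩ := h
  exact ⟨f, fun v hv => lt_of_lt_of_le (hf1 v hv) hn, hf2⟩

lemma goodCol_singleton {v : V} {n : ℕ} (hn : 1 ≤ n) : GoodCol G {v} n :=
  ⟨fun _ => 0, fun _ _ => hn, by rintro a rfl b rfl hab; exact absurd hab (G.irrefl)⟩

lemma GoodCol.union {A B : Set V} {a b : ℕ} (hA : GoodCol G A a) (hB : GoodCol G B b) :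
    GoodCol G (A ∪ B) (a + b) := by
  classical
  obtain ⟨f, hf1, hf2⟩ := hA
  obtain ⟨g, hg1, hg2⟩ := hB
  refine ⟨fun v => if v ∈ A then f v else a + g v, ?_, ?_⟩
  · intro v hv
    by_cases hvA : v ∈ A
    · simp only [hvA, if_true]
      exact lt_of_lt_of_le (hf1 v hvA) (Nat.le_add_right _ _)
    · have hvB : v ∈ B := hv.resolve_left hvA
      simp only [hvA, if_false]
      exact Nat.add_lt_add_left (hg1 v hvB) a
  · intro x hx y hy hxy
    by_cases hxA : x ∈ A <;> by_cases hyA : y ∈ A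
    · simp only [hxA, hyA, if_true]; exact hf2 x hxA y hyA hxy
    · simp only [hxA, hyA, if_true, if_false]
      exact ne_of_lt (lt_of_lt_of_le (hf1 x hxA) (Nat.le_add_right _ _))
    · simp only [hxA, hyA, if_true, if_false]
      exact (ne_of_lt (lt_of_lt_of_le (hf1 y hyA) (Nat.le_add_right _ _))).symm
    · have hxB : x ∈ B := hx.resolve_left hxA
      have hyB : y ∈ B := hy.resolve_left hyA
      simp only [hxA, hyA, if_false]
      intro h
      exact hg2 x hxB y hyB hxy (Nat.add_left_cancel h)

lemma stepIn_symm {D : Set V} {x y : V} (h : StepIn G D x y) : StepIn G D y x :=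
  ⟨h.2.1, h.1, h.2.2.symm⟩

lemma reachIn_symm {D : Set V} {x y : V} (h : ReachIn G D x y) : ReachIn G D y x :=
  by
  induction h with
  | refl => exact Relation.ReflTransGen.refl
  | tail _ hbc ih => exact Relation.ReflTransGen.head (stepIn_symm hbc) ih

lemma mem_compIn_self {D : Set V} {x : V} : x ∈ compIn G D x :=
  Relation.ReflTransGen.refl

lemma compIn_subset {D : Set V} {x : V} (hx : x ∈ D) : compIn G D x ⊆ D := by
  intro y hy
  induction hy with
  | refl => exact hx
  | tail _ hbc _ => exact hbc.2.1

lemma compIn_closed {D : Set V} {x y z : V} (hy : y ∈ compIn G D x) (hyD : y ∈ D)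
    (hz : z ∈ D) (ha : G.Adj y z) : z ∈ compIn G D x :=
  Relation.ReflTransGen.tail hy ⟨hyD, hz, ha⟩

lemma reachIn_compIn {D : Set V} {x y : V} (hx : x ∈ D) (h : ReachIn G D x y) :
    ReachIn G (compIn G D x) x y := by
  induction h with
  | refl => exact Relation.ReflTransGen.refl
  | @tail b c hab hbc ih =>
      exact Relation.ReflTransGen.tail ih ⟨hab, Relation.ReflTransGen.tail hab hbc, hbc.2.2⟩

lemma compIn_conn {D : Set V} {x : V} (hx : x ∈ D) :
    ∀ y ∈ compIn G D x, ∀ z ∈ compIn G D x, ReachIn G (compIn G D x) y z := by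
  intro y hy z hz
  exact Relation.ReflTransGen.trans (reachIn_symm (reachIn_compIn hx hy)) (reachIn_compIn hx hz)

lemma compIn_eq_of_adj {D : Set V} {x y : V} (hx : x ∈ D) (hy : y ∈ D) (ha : G.Adj x y) :
    compIn G D x = compIn G D y := by
  ext z
  constructor
  · intro h
    exact Relation.ReflTransGen.trans (Relation.ReflTransGen.single ⟨hy, hx, ha.symm⟩) h
  · intro h
    exact Relation.ReflTransGen.trans (Relation.ReflTransGen.single ⟨hx, hy, ha⟩) h

/-- If every component of `D` is `r`-colourable, so is `D`. -/
lemma goodCol_of_comps {D : Set V} {r : ℕ}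
    (h : ∀ x ∈ D, GoodCol G (compIn G D x) r) : GoodCol G D r := by
  classical
  have hF : ∀ C : Set V, ∃ f : V → ℕ,
      GoodCol G C r → ((∀ v ∈ C, f v < r) ∧ ∀ a ∈ C, ∀ b ∈ C, G.Adj a b → f a ≠ f b) := by
    intro C
    by_cases hC : GoodCol G C r
    · obtain ⟨f, hf⟩ := hC
      exact ⟨f, fun _ => hf⟩
    · exact ⟨fun _ => 0, fun h' => absurd h' hC⟩
  choose F hFspec using hF
  refine ⟨fun v => F (compIn G D v) v, ?_, ?_⟩
  · intro v hv
    exact (hFspec _ (h v hv)).1 v mem_compIn_self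
  · intro a ha b hb hab
    have hcomp : compIn G D a = compIn G D b := compIn_eq_of_adj ha hb hab
    have hbmem : b ∈ compIn G D a := compIn_closed mem_compIn_self ha hb hab
    have h2 := (hFspec _ (h a ha)).2 a mem_compIn_self b hbmem hab
    show F (compIn G D a) a ≠ F (compIn G D b) b
    rw [← hcomp]
    exact h2

lemma not_goodCol_comp {D : Set V} {r : ℕ} (h : ¬ GoodCol G D r) :
    ∃ x ∈ D, ¬ GoodCol G (compIn G D x) r := by
  by_contra h'
  push_neg at h'
  exact h (goodCol_of_comps h')

/-- Boundary lemma: in a connected set `C`, if `v` has a neighbour `s ∈ C` and `x ∈ C` is a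
non-neighbour of `v`, then some neighbour `u` of `v` in `C` has a neighbour `u'` in the
component of `x` in `C \ N(v)`. -/
lemma boundary {C : Set V} (hconn : ∀ y ∈ C, ∀ z ∈ C, ReachIn G C y z) {v s x : V}
    (hs : s ∈ C) (hsv : G.Adj v s) (hx : x ∈ C) (hxv : ¬ G.Adj v x) :
    ∃ u u', u ∈ C ∧ G.Adj v u ∧ u' ∈ compIn G (C \ G.neighborSet v) x ∧ G.Adj u u' := by
  set D := C \ G.neighborSet v with hD
  have hxD : x ∈ D := ⟨hx, hxv⟩
  have key : ∀ y, ReachIn G C x y →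
      (y ∈ compIn G D x ∨ ∃ u u', u ∈ C ∧ G.Adj v u ∧ u' ∈ compIn G D x ∧ G.Adj u u') := by
    intro y hy
    induction hy with
    | refl => exact Or.inl mem_compIn_self
    | @tail b c hab hbc ih =>
        rcases ih with hb | hgoal
        · by_cases hc : G.Adj v c
          · exact Or.inr ⟨c, b, hbc.2.1, hc, hb, hbc.2.2.symm⟩
          · refine Or.inl (compIn_closed hb (compIn_subset hxD hb) ⟨hbc.2.1, hc⟩ hbc.2.2)
        · exact Or.inr hgoal
  rcases key s (hconn x hx s hs) with hs' | hgoal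
  · exact absurd hsv (compIn_subset hxD hs').2
  · exact hgoal

end Aux

/-! ### The Gyárfás path structure -/

/-- The invariant maintained during the Gyárfás path argument: an induced path on `j`
vertices together with a connected "reservoir" `C` that is anticomplete to all path vertices
except the last one, meets the last one, and is hard to colour. -/
structure GP {V : Type*} (G : SimpleGraph V) (U : Set V) (k m : ℕ) (j : ℕ) where
  p : ℕ → V
  C : Set V
  hpU : ∀ t, t < j → p t ∈ U
  hCU : C ⊆ U
  hadj : ∀ t, t + 1 < j → G.Adj (p t) (p (t + 1))
  hnadj : ∀ s t, s + 2 ≤ t → t < j → ¬ G.Adj (p s) (p t)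
  hne : ∀ s t, s < t → t < j → p s ≠ p t
  hCconn : ∀ y ∈ C, ∀ z ∈ C, ReachIn G C y z
  hdisj : ∀ t, t < j → p t ∉ C
  hanti : ∀ t, t + 1 < j → ∀ x ∈ C, ¬ G.Adj (p t) x
  hnbr : ∃ u ∈ C, G.Adj (p (j - 1)) u
  hcol : ¬ GoodCol G C ((k - 1 - j) * m)

section Gyarfas

variable {V : Type*} {G : SimpleGraph V} {U : Set V} {k m : ℕ}

lemma gp_base (hk : 4 ≤ k) (hm : 1 ≤ m)
    (hnbr : ∀ v ∈ U, GoodCol G (U ∩ G.neighborSet v) m)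
    (hU : ¬ GoodCol G U ((k - 2) * m)) : Nonempty (GP G U k m 2) := by
  obtain ⟨v₁, hv₁U, hC₀⟩ := not_goodCol_comp hU
  have hC₀U : compIn G U v₁ ⊆ U := compIn_subset hv₁U
  have hv₁C₀ : v₁ ∈ compIn G U v₁ := mem_compIn_self
  have hconn := compIn_conn (G := G) hv₁U
  have hsplit : compIn G U v₁ ⊆
      (compIn G U v₁ \ G.neighborSet v₁) ∪ (compIn G U v₁ ∩ G.neighborSet v₁) := by
    intro y hy
    by_cases h : y ∈ G.neighborSet v₁
    · exact Or.inr ⟨hy, h⟩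
    · exact Or.inl ⟨hy, h⟩
  have hS : GoodCol G (compIn G U v₁ ∩ G.neighborSet v₁) m :=
    (hnbr v₁ hv₁U).mono_set (fun y hy => ⟨hC₀U hy.1, hy.2⟩)
  have hD₀ : ¬ GoodCol G (compIn G U v₁ \ G.neighborSet v₁) ((k - 3) * m) := by
    intro hgc
    have hgc2 := (hgc.union hS).mono_set hsplit
    have harith : (k - 3) * m + m = (k - 2) * m := by
      have h' : k - 2 = (k - 3) + 1 := by omega
      rw [h', Nat.succ_mul]
    rw [harith] at hgc2
    exact hC₀ hgc2
  obtain ⟨x₁, hx₁D, hC₁⟩ := not_goodCol_comp hD₀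
  have hC₁D : compIn G (compIn G U v₁ \ G.neighborSet v₁) x₁ ⊆
      (compIn G U v₁ \ G.neighborSet v₁) := compIn_subset hx₁D
  have hkm : 1 ≤ (k - 3) * m := Nat.mul_pos (by omega) hm
  have hv₁x₁ : v₁ ≠ x₁ := by
    rintro rfl
    apply hC₁
    apply (goodCol_singleton (v := v₁) hkm).mono_set
    intro z hz
    rcases Relation.ReflTransGen.cases_head hz with h | ⟨c, hstep, -⟩
    · exact h.symm
    · exact absurd hstep.2.2 hstep.2.1.2
  have hx₁C₀ : x₁ ∈ compIn G U v₁ := hx₁D.1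
  obtain ⟨s, hstep, -⟩ :=
    (Relation.ReflTransGen.cases_head (hconn v₁ hv₁C₀ x₁ hx₁C₀)).resolve_left hv₁x₁
  obtain ⟨u, u', huC₀, huv, hu'C₁, huu'⟩ :=
    boundary hconn hstep.2.1 hstep.2.2 hx₁C₀ hx₁D.2
  have hv₁notC₁ : v₁ ∉ compIn G (compIn G U v₁ \ G.neighborSet v₁) x₁ := by
    intro hmem
    rcases Relation.ReflTransGen.cases_tail hmem with h | ⟨c, -, hstep'⟩
    · exact hv₁x₁ h
    · exact hstep'.1.2 hstep'.2.2.symm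
  have hunotC₁ : u ∉ compIn G (compIn G U v₁ \ G.neighborSet v₁) x₁ := by
    intro hmem
    exact (hC₁D hmem).2 huv
  refine ⟨⟨fun t => if t = 0 then v₁ else u,
    compIn G (compIn G U v₁ \ G.neighborSet v₁) x₁, ?_, ?_, ?_, ?_, ?_, ?_, ?_, ?_, ?_, ?_⟩⟩
  · intro t ht
    by_cases h : t = 0
    · simpa [h] using hv₁U
    · simpa [h] using hC₀U huC₀
  · exact fun y hy => hC₀U (hC₁D hy).1
  · intro t ht
    have h : t = 0 := by omega
    subst h
    simpa using huv
  · intro s t hst ht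
    omega
  · intro s t hst ht
    have hs : s = 0 := by omega
    have ht1 : t = 1 := by omega
    subst hs; subst ht1
    simpa using huv.ne
  · exact compIn_conn hx₁D
  · intro t ht
    by_cases h : t = 0
    · simpa [h] using hv₁notC₁
    · simpa [h] using hunotC₁
  · intro t ht x hx
    have h : t = 0 := by omega
    subst h
    simp only [if_pos rfl]
    exact fun hadj => (hC₁D hx).2 hadj
  · refine ⟨u', hu'C₁, ?_⟩
    simpa using huu'
  · have h' : k - 1 - 2 = k - 3 := by omega
    rw [h']
    exact hC₁

lemma gp_step (hm : 1 ≤ m)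
    (hnbr : ∀ v ∈ U, GoodCol G (U ∩ G.neighborSet v) m)
    {j : ℕ} (h2 : 2 ≤ j) (hj : j ≤ k - 3) (gp : GP G U k m j) :
    Nonempty (GP G U k m (j + 1)) := by
  have hvU : gp.p (j - 1) ∈ U := gp.hpU _ (by omega)
  obtain ⟨s, hsC, hsv⟩ := gp.hnbr
  have hS : GoodCol G (gp.C ∩ G.neighborSet (gp.p (j - 1))) m :=
    (hnbr _ hvU).mono_set (fun y hy => ⟨gp.hCU hy.1, hy.2⟩)
  have hsplit : gp.C ⊆ (gp.C \ G.neighborSet (gp.p (j - 1))) ∪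
      (gp.C ∩ G.neighborSet (gp.p (j - 1))) := by
    intro y hy
    by_cases h : y ∈ G.neighborSet (gp.p (j - 1))
    · exact Or.inr ⟨hy, h⟩
    · exact Or.inl ⟨hy, h⟩
  have hD : ¬ GoodCol G (gp.C \ G.neighborSet (gp.p (j - 1))) ((k - 1 - (j + 1)) * m) := by
    intro hgc
    have hgc2 := (hgc.union hS).mono_set hsplit
    have harith : (k - 1 - (j + 1)) * m + m = (k - 1 - j) * m := by
      have h' : k - 1 - j = (k - 1 - (j + 1)) + 1 := by omega
      rw [h', Nat.succ_mul]
    rw [harith] at hgc2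
    exact gp.hcol hgc2
  obtain ⟨x', hx'D, hC'⟩ := not_goodCol_comp hD
  obtain ⟨u, u', huC, huv, hu'C', huu'⟩ :=
    boundary gp.hCconn hsC hsv hx'D.1 hx'D.2
  have hC'D : compIn G (gp.C \ G.neighborSet (gp.p (j - 1))) x' ⊆
      gp.C \ G.neighborSet (gp.p (j - 1)) := compIn_subset hx'D
  refine ⟨⟨fun t => if t = j then u else gp.p t,
    compIn G (gp.C \ G.neighborSet (gp.p (j - 1))) x', ?_, ?_, ?_, ?_, ?_, ?_, ?_, ?_, ?_, ?_⟩⟩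
  · intro t ht
    by_cases h : t = j
    · simpa [h] using gp.hCU huC
    · simp only [if_neg h]
      exact gp.hpU t (by omega)
  · exact fun y hy => gp.hCU (hC'D hy).1
  · intro t ht
    by_cases h : t + 1 = j
    · have htj : t ≠ j := by omega
      simp only [if_neg htj, h, if_pos rfl]
      have : t = j - 1 := by omega
      rw [this]
      exact huv
    · have htj : t ≠ j := by omega
      have ht1j : t + 1 ≠ j := h
      simp only [if_neg htj, if_neg ht1j]
      exact gp.hadj t (by omega)
  · intro a t hat ht
    by_cases h : t = j
    · have haj : a ≠ j := by omega
      simp only [if_neg haj, h, if_pos rfl]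
      exact fun hadj => gp.hanti a (by omega) u huC hadj
    · have haj : a ≠ j := by omega
      simp only [if_neg haj, if_neg h]
      exact gp.hnadj a t hat (by omega)
  · intro a t hat ht
    by_cases h : t = j
    · have haj : a ≠ j := by omega
      simp only [if_neg haj, h, if_pos rfl]
      intro heq
      exact gp.hdisj a (by omega) (heq ▸ huC)
    · have haj : a ≠ j := by omega
      simp only [if_neg haj, if_neg h]
      exact gp.hne a t hat (by omega)
  · exact compIn_conn hx'D
  · intro t ht
    by_cases h : t = j
    · simp only [h, if_pos rfl]
      exact fun hmem => (hC'D hmem).2 huv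
    · simp only [if_neg h]
      exact fun hmem => gp.hdisj t (by omega) (hC'D hmem).1
  · intro t ht x hx
    have htj : t ≠ j := by omega
    simp only [if_neg htj]
    by_cases h : t = j - 1
    · rw [h]
      exact fun hadj => (hC'D hx).2 hadj
    · exact gp.hanti t (by omega) x (hC'D hx).1
  · refine ⟨u', hu'C', ?_⟩
    have h' : j + 1 - 1 = j := by omega
    rw [h']
    simpa using huu'
  · exact hC'

/-- The key lemma: if every neighbourhood (within `U`) is `m`-colourable and `G` is
`P_k`-free then `U` is `(k-2)m`-colourable. -/
lemma keyLemma (hk : 4 ≤ k) (hm : 1 ≤ m) (hG : FreeOf G (pathGraph k)) (U : Set V)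
    (hnbr : ∀ v ∈ U, GoodCol G (U ∩ G.neighborSet v) m) :
    GoodCol G U ((k - 2) * m) := by
  by_contra hU
  have hiter : ∀ d : ℕ, d ≤ k - 4 → Nonempty (GP G U k m (d + 2)) := by
    intro d
    induction d with
    | zero => exact fun _ => gp_base hk hm hnbr hU
    | succ d ih =>
        intro hd
        have hd' : d ≤ k - 4 := by omega
        obtain ⟨gp⟩ := ih hd'
        have h2 : 2 ≤ d + 2 := by omega
        have h3 : d + 2 ≤ k - 3 := by omega
        exact gp_step hm hnbr h2 h3 gp
  have hgp : Nonempty (GP G U k m (k - 2)) := by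
    have h := hiter (k - 4) le_rfl
    rwa [show k - 4 + 2 = k - 2 by omega] at h
  obtain ⟨gp⟩ := hgp
  set j : ℕ := k - 2 with hjdef
  -- extract data for the final extension
  have hvU : gp.p (j - 1) ∈ U := gp.hpU _ (by omega)
  obtain ⟨s, hsC, hsv⟩ := gp.hnbr
  have hS : GoodCol G (gp.C ∩ G.neighborSet (gp.p (j - 1))) m :=
    (hnbr _ hvU).mono_set (fun y hy => ⟨gp.hCU hy.1, hy.2⟩)
  have hcolC : ¬ GoodCol G gp.C m := by
    have h' := gp.hcol
    have harith : (k - 1 - j) * m = m := by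
      have : k - 1 - j = 1 := by omega
      rw [this, one_mul]
    rwa [harith] at h'
  have hex : ∃ x, x ∈ gp.C \ G.neighborSet (gp.p (j - 1)) := by
    by_contra h
    push_neg at h
    apply hcolC
    apply hS.mono_set
    intro y hy
    rcases Classical.em (y ∈ G.neighborSet (gp.p (j - 1))) with h' | h'
    · exact ⟨hy, h'⟩
    · exact absurd ⟨hy, h'⟩ (h y)
  obtain ⟨x', hx'⟩ := hex
  obtain ⟨u, u', huC, huv, hu'comp, huu'⟩ := boundary gp.hCconn hsC hsv hx'.1 hx'.2
  have hu'D : u' ∈ gp.C \ G.neighborSet (gp.p (j - 1)) := compIn_subset hx' hu'comp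
  -- the extended sequence
  set q : ℕ → V := fun t => if t < j then gp.p t else if t = j then u else u' with hqdef
  have hqlt : ∀ t, t < j → q t = gp.p t := by
    intro t ht; simp only [hqdef, if_pos ht]
  have hqj : q j = u := by simp [hqdef]
  have hqj1 : q (j + 1) = u' := by
    simp only [hqdef]
    rw [if_neg (by omega), if_neg (by omega)]
  have hj2 : 2 ≤ j := by omega
  have hjk : j + 2 = k := by omega
  have Qadj : ∀ t, t + 1 < k → G.Adj (q t) (q (t + 1)) := by
    intro t ht
    by_cases h1 : t + 1 < j
    · rw [hqlt t (by omega), hqlt (t + 1) h1]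
      exact gp.hadj t h1
    · by_cases h2 : t + 1 = j
      · rw [hqlt t (by omega), h2, hqj]
        have : t = j - 1 := by omega
        rw [this]
        exact huv
      · have h3 : t = j := by omega
        rw [h3, hqj, hqj1]
        exact huu'
  have Qnadj : ∀ a t, a + 2 ≤ t → t < k → ¬ G.Adj (q a) (q t) := by
    intro a t hat ht
    by_cases h1 : t < j
    · rw [hqlt a (by omega), hqlt t h1]
      exact gp.hnadj a t hat h1
    · by_cases h2 : t = j
      · rw [hqlt a (by omega), h2, hqj]
        exact gp.hanti a (by omega) u huC
      · have h3 : t = j + 1 := by omega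
        rw [h3, hqj1]
        by_cases h4 : a = j - 1
        · rw [hqlt a (by omega), h4]
          exact fun hadj => hu'D.2 hadj
        · rw [hqlt a (by omega)]
          exact gp.hanti a (by omega) u' hu'D.1
  have Qne : ∀ a t, a < t → t < k → q a ≠ q t := by
    intro a t hat ht
    by_cases h1 : t < j
    · rw [hqlt a (by omega), hqlt t h1]
      exact gp.hne a t hat h1
    · by_cases h2 : t = j
      · rw [hqlt a (by omega), h2, hqj]
        exact fun heq => gp.hdisj a (by omega) (heq ▸ huC)
      · have h3 : t = j + 1 := by omega
        rw [h3, hqj1]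
        by_cases h5 : a = j
        · rw [h5, hqj]
          exact huu'.ne
        · rw [hqlt a (by omega)]
          exact fun heq => gp.hdisj a (by omega) (heq ▸ hu'D.1)
  -- build the embedding
  have hG' : IsEmpty (pathGraph k ↪g G) := hG
  refine hG'.false ?_
  refine ⟨⟨fun i => q i.val, ?_⟩, ?_⟩
  · intro a b hab
    by_contra hne'
    rcases Nat.lt_or_ge a.val b.val with h | h
    · exact Qne a.val b.val h b.isLt hab
    · have h' : b.val < a.val := lt_of_le_of_ne h (fun e => hne' (Fin.ext e.symm))
      exact Qne b.val a.val h' a.isLt hab.symm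
  · intro a b
    show G.Adj (q a.val) (q b.val) ↔ _
    rw [pathGraph_adj]
    constructor
    · intro hadj
      by_contra hcon
      push_neg at hcon
      rcases Nat.lt_trichotomy a.val b.val with h | h | h
      · have : a.val + 2 ≤ b.val := by omega
        exact Qnadj a.val b.val this b.isLt hadj
      · rw [Fin.ext h] at hadj
        exact G.irrefl hadj
      · have : b.val + 2 ≤ a.val := by omega
        exact Qnadj b.val a.val this a.isLt hadj.symm
    · rintro (h | h)
      · have := Qadj a.val (by omega)
        rwa [h] at this
      · have := Qadj b.val (by omega)
        rw [h] at this
        exact this.symm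

end Gyarfas

/-! ### Main theorem -/

lemma main_ind {V : Type*} {G : SimpleGraph V} {k : ℕ} (hk : 4 ≤ k)
    (hG : FreeOf G (pathGraph k)) :
    ∀ a : ℕ, ∀ U : Set V, G.CliqueFreeOn U (a + 2) → GoodCol G U ((k - 2) ^ a) := by
  intro a
  induction a with
  | zero =>
      intro U hU
      refine ⟨fun _ => 0, fun v _ => Nat.one_pos, ?_⟩
      intro x hx y hy hxy _
      classical
      refine hU (t := {x, y}) ?_ ?_
      · intro z hz
        simp only [Finset.coe_insert, Finset.coe_singleton, Set.mem_insert_iff,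
          Set.mem_singleton_iff] at hz
        rcases hz with rfl | rfl
        · exact hx
        · exact hy
      · constructor
        · intro u hu w hw huw
          simp only [Finset.coe_insert, Finset.coe_singleton, Set.mem_insert_iff,
            Set.mem_singleton_iff] at hu hw
          rcases hu with rfl | rfl <;> rcases hw with rfl | rfl
          · exact absurd rfl huw
          · exact hxy
          · exact hxy.symm
          · exact absurd rfl huw
        · rw [Finset.card_insert_of_notMem (by simp [hxy.ne]), Finset.card_singleton]
  | succ a ih =>
      intro U hU
      have hm : 1 ≤ (k - 2) ^ a := Nat.one_le_pow _ _ (by omega)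
      have hnb : ∀ v ∈ U, G.CliqueFreeOn (U ∩ G.neighborSet v) (a + 2) := by
        intro v hv
        have hU' : G.CliqueFreeOn U (a + 2 + 1) := hU
        exact SimpleGraph.CliqueFreeOn.of_succ G hU' hv
      have := keyLemma hk hm hG U (fun v hv => ih _ (hnb v hv))
      rw [pow_succ]
      rw [mul_comm] at this
      exact this

/-- For every `w ≥ 2` and `k ≥ 4`, every `P_k`-free graph `G` with clique
number at most `w` satisfies `χ(G) ≤ (k − 2)^(w − 1)`. -/
theorem stmt_5 {V : Type*} [Fintype V] (w k : ℕ) (hw : 2 ≤ w) (hk : 4 ≤ k)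
    (G : SimpleGraph V) (hG : FreeOf G (pathGraph k))
    (hclique : G.CliqueFree (w + 1)) :
    chi G ≤ (k - 2) ^ (w - 1) := by
  obtain ⟨a, rfl⟩ : ∃ a, w = a + 1 + 1 := ⟨w - 2, by omega⟩
  have hfree : G.CliqueFreeOn Set.univ ((a + 1) + 2) := by
    have : a + 1 + 1 + 1 = a + 1 + 2 := by omega
    rw [this] at hclique
    exact hclique.cliqueFreeOn
  obtain ⟨f, hf1, hf2⟩ := main_ind hk hG (a + 1) Set.univ hfree
  set n := (k - 2) ^ (a + 1) with hn
  have hcolor : G.Colorable n := by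
    refine ⟨SimpleGraph.Coloring.mk (fun v => (⟨f v, hf1 v (Set.mem_univ v)⟩ : Fin n)) ?_⟩
    intro x y hxy h
    exact hf2 x (Set.mem_univ x) y (Set.mem_univ y) hxy (by simpa [Fin.ext_iff] using h)
  have hle : G.chromaticNumber ≤ (n : ℕ∞) := hcolor.chromaticNumber_le
  have : chi G ≤ n := ENat.toNat_le_of_le_coe hle
  simpa using this
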